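/- Assume V₀ < d₀²/4, let X be the unique solution of X = V(A + X) with ‖X‖ ≤ r_min, and set H₁ = A + X. Then for every z ∈ ℂ with dist(z, σ(A)) ≤ d₀/2, the operator M(z) = A − z + ∫₀¹ γ'(t) (z − γ(t))⁻¹ · K(γ(t)) dt is boundedly invertible on H if and only if z ∉ σ(H₁). In other words, inside the closed d₀/2-neighborhood of σ(A) the spectrum of the continued transfer function M coincides exactly with the spectrum of H₁ (including the complex spectrum, in particular the resonances). -/

import Mathlib

open MeasureTheory Metric Set

noncomputable section

variable {H : Type*} [NormedAddCommGroup H] [InnerProductSpace ℂ H] [CompleteSpace H]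

/-- `d₀ = inf_{t ∈ [0,1]} dist (γ t, σ(A))`. -/
noncomputable def curveDist (A : H →L[ℂ] H) (γ : ℝ → ℂ) : ℝ :=
  ⨅ t : Set.Icc (0 : ℝ) 1, Metric.infDist (γ t) (spectrum ℂ A)

/-- `V₀ = ∫₀¹ |γ'(t)| ‖K(γ(t))‖ dt`. -/
noncomputable def curveVar (K : ℂ → H →L[ℂ] H) (γ : ℝ → ℂ) : ℝ :=
  ∫ t in (0:ℝ)..1, ‖derivWithin γ (Set.Icc 0 1) t‖ * ‖K (γ t)‖

/-- `V(Y) = ∫₀¹ γ'(t) • K(γ(t)) ∘ (Y − γ(t))⁻¹ dt` (Bochner integral in `B(H)`). -/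
noncomputable def Vmap (K : ℂ → H →L[ℂ] H) (γ : ℝ → ℂ) (Y : H →L[ℂ] H) : H →L[ℂ] H :=
  ∫ t in (0:ℝ)..1, derivWithin γ (Set.Icc 0 1) t •
    (K (γ t) ∘L Ring.inverse (Y - γ t • (1 : H →L[ℂ] H)))

/-- `r_min = d₀/2 − √(d₀²/4 − V₀)`. -/
noncomputable def rMin (A : H →L[ℂ] H) (K : ℂ → H →L[ℂ] H) (γ : ℝ → ℂ) : ℝ :=
  curveDist A γ / 2 - Real.sqrt ((curveDist A γ) ^ 2 / 4 - curveVar K γ)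

/-- `V₁(z) = ∫₀¹ γ'(t) (z − γ(t))⁻¹ • K(γ(t)) dt`. -/
noncomputable def V1 (K : ℂ → H →L[ℂ] H) (γ : ℝ → ℂ) (z : ℂ) : H →L[ℂ] H :=
  ∫ t in (0:ℝ)..1, (derivWithin γ (Set.Icc 0 1) t * (z - γ t)⁻¹) • K (γ t)

/-- The continued transfer function `M(z) = A − z + V₁(z)`. -/
noncomputable def Mfun (A : H →L[ℂ] H) (K : ℂ → H →L[ℂ] H) (γ : ℝ → ℂ) (z : ℂ) :
    H →L[ℂ] H :=
  A - z • (1 : H →L[ℂ] H) + V1 K γ z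


lemma aux_oneSub {R : Type*} [NormedRing R] [CompleteSpace R] [NormOneClass R] (t : R)
    (h : ‖t‖ < 1) : IsUnit (1 - t) ∧ ‖Ring.inverse (1 - t)‖ ≤ (1 - ‖t‖)⁻¹ := by
  refine ⟨isUnit_one_sub_of_norm_lt_one h, ?_⟩
  rw [← geom_series_eq_inverse t h]
  simpa [norm_one] using tsum_geometric_le_of_norm_lt_one t h

lemma aux_perturb {R : Type*} [NormedRing R] [CompleteSpace R] [NormOneClass R]
    {B X : R} {d : ℝ} (hd : 0 < d) (hB : IsUnit B)
    (hBi : ‖Ring.inverse B‖ ≤ d⁻¹) (hX : ‖X‖ < d) :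
    IsUnit (B + X) ∧ ‖Ring.inverse (B + X)‖ ≤ (d - ‖X‖)⁻¹ := by
  obtain ⟨u, rfl⟩ := hB
  rw [Ring.inverse_unit] at hBi
  set t : R := -(↑u⁻¹ * X) with ht_def
  have hti : ‖t‖ ≤ ‖X‖ / d := by
    rw [ht_def, norm_neg]
    calc ‖(↑u⁻¹ : R) * X‖ ≤ ‖(↑u⁻¹ : R)‖ * ‖X‖ := norm_mul_le _ _
      _ ≤ d⁻¹ * ‖X‖ := by gcongr
      _ = ‖X‖ / d := by rw [div_eq_mul_inv, mul_comm]
  have ht1 : ‖t‖ < 1 := hti.trans_lt (by rwa [div_lt_one hd])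
  have key : (↑u : R) + X = ↑u * (1 - t) := by
    rw [ht_def, mul_sub, mul_one, mul_neg, sub_neg_eq_add, Units.mul_inv_cancel_left]
  obtain ⟨h1, h2⟩ := aux_oneSub t ht1
  obtain ⟨w, hw⟩ := h1
  constructor
  · rw [key]; exact u.isUnit.mul ⟨w, hw⟩
  · have hXd : ‖X‖ / d < 1 := by rwa [div_lt_one hd]
    have e1 : Ring.inverse ((↑u : R) + X) = ↑w⁻¹ * ↑u⁻¹ := by
      rw [key, ← hw, ← Units.val_mul, Ring.inverse_unit, mul_inv_rev, Units.val_mul]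
    have e2 : ‖(↑w⁻¹ : R)‖ ≤ (1 - ‖t‖)⁻¹ := by
      rw [← Ring.inverse_unit w, hw]; exact h2
    have e3 : (1 - ‖t‖)⁻¹ ≤ (1 - ‖X‖ / d)⁻¹ := by
      apply inv_anti₀ (by linarith) (by linarith)
    have hne2 : d - ‖X‖ ≠ 0 := by linarith
    have e4 : (1 - ‖X‖ / d)⁻¹ * d⁻¹ = (d - ‖X‖)⁻¹ := by
      field_simp
    calc ‖Ring.inverse ((↑u : R) + X)‖ = ‖(↑w⁻¹ : R) * ↑u⁻¹‖ := by rw [e1]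
      _ ≤ ‖(↑w⁻¹ : R)‖ * ‖(↑u⁻¹ : R)‖ := norm_mul_le _ _
      _ ≤ (1 - ‖X‖ / d)⁻¹ * d⁻¹ := by
          exact mul_le_mul (e2.trans e3) hBi (norm_nonneg _)
            (inv_nonneg.mpr (by linarith))
      _ = (d - ‖X‖)⁻¹ := e4

lemma aux_resolvent (A : H →L[ℂ] H) (hA : IsSelfAdjoint A) (z : ℂ) {d : ℝ} (hd : 0 < d)
    (h : ∀ x ∈ spectrum ℂ A, d ≤ ‖x - z‖) :
    IsUnit (A - z • 1) ∧ ‖Ring.inverse (A - z • 1)‖ ≤ d⁻¹ := by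
  have hsn : IsStarNormal A := hA.isStarNormal
  have hz : ∀ x ∈ spectrum ℂ A, x - z ≠ 0 := by
    intro x hx h0
    have := h x hx
    rw [h0, norm_zero] at this
    linarith
  have hc : ContinuousOn (fun x : ℂ => (x - z)⁻¹) (spectrum ℂ A) :=
    ContinuousOn.inv₀ (by fun_prop) hz
  have h2 : A - z • 1 = cfc (fun x : ℂ => x - z) A := by
    rw [cfc_sub _ _ A (by fun_prop) (by fun_prop), cfc_id' ℂ A, cfc_const z A]
    simp [Algebra.algebraMap_eq_smul_one]
  have hmul1 : cfc (fun x : ℂ => (x - z)⁻¹) A * (A - z • 1) = 1 := by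
    rw [h2, ← cfc_mul _ _ A hc (by fun_prop)]
    rw [cfc_congr (g := fun _ => (1:ℂ)) (fun x hx => by
      field_simp [sub_ne_zero.mpr (fun h : x = z => (hz x hx) (by rw [h, sub_self]))])]
    exact cfc_one ℂ A
  have hmul2 : (A - z • 1) * cfc (fun x : ℂ => (x - z)⁻¹) A = 1 := by
    rw [h2, ← cfc_mul _ _ A (by fun_prop) hc]
    rw [cfc_congr (g := fun _ => (1:ℂ)) (fun x hx => by
      field_simp [sub_ne_zero.mpr (fun h : x = z => (hz x hx) (by rw [h, sub_self]))])]
    exact cfc_one ℂ A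
  refine ⟨⟨⟨A - z • 1, cfc (fun x : ℂ => (x - z)⁻¹) A, hmul2, hmul1⟩, rfl⟩, ?_⟩
  have : Ring.inverse (A - z • 1) = cfc (fun x : ℂ => (x - z)⁻¹) A :=
    Ring.inverse_unit ⟨A - z • 1, cfc (fun x : ℂ => (x - z)⁻¹) A, hmul2, hmul1⟩
  rw [this]
  refine norm_cfc_le (by positivity) fun x hx => ?_
  rw [norm_inv]
  exact inv_anti₀ hd (h x hx)


/-- inside the closed `d₀/2`-neighborhood of `σ(A)` the spectrum of the
continued transfer function `M` coincides exactly with the spectrum of `H₁ = A + X`. -/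
theorem statement6 (A : H →L[ℂ] H) (hA : IsSelfAdjoint A)
    (γ : ℝ → ℂ) (hγ : ContDiffOn ℝ 1 γ (Set.Icc 0 1))
    (hΓ : ∀ t ∈ Set.Icc (0:ℝ) 1, γ t ∉ spectrum ℂ A)
    (K : ℂ → H →L[ℂ] H) (hK : ContinuousOn (fun t => K (γ t)) (Set.Icc 0 1))
    (hV : curveVar K γ < (curveDist A γ) ^ 2 / 4)
    (X : H →L[ℂ] H) (hXn : ‖X‖ ≤ rMin A K γ)
    (hXσ : Disjoint (spectrum ℂ (A + X)) (γ '' Set.Icc (0:ℝ) 1))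
    (hX : X = Vmap K γ (A + X)) :
    ∀ z : ℂ, Metric.infDist z (spectrum ℂ A) ≤ curveDist A γ / 2 →
      (IsUnit (Mfun A K γ z) ↔ z ∉ spectrum ℂ (A + X)) := by
  intro z hz
  rcases subsingleton_or_nontrivial H with hs | hn
  · exact ⟨fun _ => spectrum.notMem_iff.mpr (isUnit_of_subsingleton _),
      fun _ => isUnit_of_subsingleton _⟩
  have hI : Set.uIcc (0:ℝ) 1 = Set.Icc 0 1 := Set.uIcc_of_le zero_le_one
  have hV₀ : 0 ≤ curveVar K γ :=
    intervalIntegral.integral_nonneg zero_le_one (fun t _ => by positivity)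
  have hd₀nn : 0 ≤ curveDist A γ := Real.iInf_nonneg fun t => Metric.infDist_nonneg
  have hd₀ : 0 < curveDist A γ := by
    rcases eq_or_lt_of_le hd₀nn with h | h
    · exfalso; rw [← h] at hV; norm_num at hV; linarith
    · exact h
  have hXlt : ‖X‖ < curveDist A γ / 2 := by
    have h1 : 0 < Real.sqrt ((curveDist A γ) ^ 2 / 4 - curveVar K γ) :=
      Real.sqrt_pos.mpr (by linarith)
    unfold rMin at hXn
    linarith
  have hd₀le : ∀ t ∈ Set.Icc (0:ℝ) 1,
      curveDist A γ ≤ Metric.infDist (γ t) (spectrum ℂ A) := by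
    intro t ht
    exact ciInf_le ⟨0, by rintro x ⟨s, rfl⟩; exact Metric.infDist_nonneg⟩
      (⟨t, ht⟩ : Set.Icc (0:ℝ) 1)
  -- resolvent bounds for A + X - γ t
  have hres : ∀ t ∈ Set.Icc (0:ℝ) 1, IsUnit (A + X - γ t • (1 : H →L[ℂ] H)) ∧
      ‖Ring.inverse (A + X - γ t • (1 : H →L[ℂ] H))‖ ≤ 2 / curveDist A γ := by
    intro t ht
    have hxb : ∀ x ∈ spectrum ℂ A, curveDist A γ ≤ ‖x - γ t‖ := by
      intro x hx
      calc curveDist A γ ≤ Metric.infDist (γ t) (spectrum ℂ A) := hd₀le t ht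
        _ ≤ dist (γ t) x := Metric.infDist_le_dist_of_mem hx
        _ = ‖x - γ t‖ := by rw [dist_eq_norm, norm_sub_rev]
    have hAres := aux_resolvent A hA (γ t) hd₀ hxb
    have hp := aux_perturb hd₀ hAres.1 hAres.2 (by linarith : ‖X‖ < curveDist A γ)
    have heq : A - γ t • (1 : H →L[ℂ] H) + X = A + X - γ t • 1 := by abel
    rw [heq] at hp
    refine ⟨hp.1, hp.2.trans ?_⟩
    calc (curveDist A γ - ‖X‖)⁻¹ ≤ (curveDist A γ / 2)⁻¹ :=
          inv_anti₀ (by linarith) (by linarith)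
      _ = 2 / curveDist A γ := inv_div _ _
  have hzγ : ∀ t ∈ Set.Icc (0:ℝ) 1, curveDist A γ / 2 ≤ ‖z - γ t‖ := by
    intro t ht
    have h1 : Metric.infDist (γ t) (spectrum ℂ A)
        ≤ Metric.infDist z (spectrum ℂ A) + dist (γ t) z :=
      Metric.infDist_le_infDist_add_dist
    have h2 := hd₀le t ht
    have h3 : dist (γ t) z = ‖z - γ t‖ := by rw [dist_eq_norm, norm_sub_rev]
    linarith
  -- continuity facts
  have hγc : ContinuousOn γ (Set.Icc 0 1) := hγ.continuousOn
  have hγ'c : ContinuousOn (fun t => derivWithin γ (Set.Icc 0 1) t) (Set.Icc 0 1) :=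
    hγ.continuousOn_derivWithin (uniqueDiffOn_Icc zero_lt_one) le_rfl
  have hRc : ContinuousOn
      (fun t => Ring.inverse (A + X - γ t • (1 : H →L[ℂ] H))) (Set.Icc 0 1) := by
    intro t ht
    have h1 : ContinuousWithinAt (fun s => A + X - γ s • (1 : H →L[ℂ] H))
        (Set.Icc 0 1) t :=
      continuousWithinAt_const.sub ((hγc t ht).smul continuousWithinAt_const)
    have h2 := NormedRing.inverse_continuousAt (hres t ht).1.unit
    rw [IsUnit.unit_spec] at h2
    show ContinuousWithinAt
      (Ring.inverse ∘ fun s => A + X - γ s • (1 : H →L[ℂ] H)) (Set.Icc 0 1) t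
    exact ContinuousAt.comp_continuousWithinAt
      (f := fun s => A + X - γ s • (1 : H →L[ℂ] H)) h2 h1
  have hzc : ContinuousOn (fun t => (z - γ t)⁻¹) (Set.Icc 0 1) :=
    (continuousOn_const.sub hγc).inv₀ (fun t ht h0 => by
      have := hzγ t ht; rw [show z - γ t = 0 from h0, norm_zero] at this; linarith)
  set R : ℝ → H →L[ℂ] H := fun t => Ring.inverse (A + X - γ t • 1) with hRdef
  set fQ : ℝ → H →L[ℂ] H :=
    fun t => (derivWithin γ (Set.Icc 0 1) t * (z - γ t)⁻¹) • (K (γ t) * R t) with hfQdef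
  set f1 : ℝ → H →L[ℂ] H :=
    fun t => (derivWithin γ (Set.Icc 0 1) t * (z - γ t)⁻¹) • K (γ t) with hf1def
  set f2 : ℝ → H →L[ℂ] H :=
    fun t => derivWithin γ (Set.Icc 0 1) t • (K (γ t) * R t) with hf2def
  have hKRc : ContinuousOn (fun t => K (γ t) * R t) (Set.Icc 0 1) := hK.mul hRc
  have hfQc : ContinuousOn fQ (Set.Icc 0 1) := (hγ'c.mul hzc).smul hKRc
  have hf1c : ContinuousOn f1 (Set.Icc 0 1) := (hγ'c.mul hzc).smul hK
  have hf2c : ContinuousOn f2 (Set.Icc 0 1) := hγ'c.smul hKRc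
  have intg : ∀ {f : ℝ → H →L[ℂ] H}, ContinuousOn f (Set.Icc 0 1) →
      IntervalIntegrable f MeasureTheory.volume 0 1 := fun hf =>
    ContinuousOn.intervalIntegrable (by rw [hI]; exact hf)
  set B' : H →L[ℂ] H := A + X - z • 1 with hB'
  -- key factorization
  have hkey : (∫ t in (0:ℝ)..1, fQ t) * B' = V1 K γ z - X := by
    have e : ∀ C : H →L[ℂ] H, C * B' = (ContinuousLinearMap.compL ℂ H H H).flip B' C :=
      fun _ => rfl
    rw [e, ← ContinuousLinearMap.intervalIntegral_comp_comm _ (intg hfQc)]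
    have h1 : ∀ t ∈ Set.uIcc (0:ℝ) 1,
        (ContinuousLinearMap.compL ℂ H H H).flip B' (fQ t) = f1 t - f2 t := by
      intro t ht
      rw [hI] at ht
      have hw0 : z - γ t ≠ 0 := fun h0 => by
        have := hzγ t ht; rw [h0, norm_zero] at this; linarith
      have e0 : (ContinuousLinearMap.compL ℂ H H H).flip B' (fQ t) = fQ t * B' := rfl
      have hBdec : B' = (A + X - γ t • (1 : H →L[ℂ] H)) - (z - γ t) • 1 := by
        rw [hB', sub_smul]; abel
      have hRB : R t * B' = 1 - (z - γ t) • R t := by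
        rw [hBdec, hRdef, mul_sub, Ring.inverse_mul_cancel _ (hres t ht).1,
          mul_smul_comm, mul_one]
      rw [e0, hfQdef, hf1def, hf2def]
      simp only []
      rw [smul_mul_assoc, mul_assoc, hRB, mul_sub, mul_one, mul_smul_comm, smul_sub,
        smul_smul, mul_assoc, inv_mul_cancel₀ hw0, mul_one]
    rw [intervalIntegral.integral_congr h1,
      intervalIntegral.integral_sub (intg hf1c) (intg hf2c)]
    have hf2X : (∫ t in (0:ℝ)..1, f2 t) = X := by rw [hX]; rfl
    have hf1V : (∫ t in (0:ℝ)..1, f1 t) = V1 K γ z := rfl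
    rw [hf2X, hf1V]
  have hfact : Mfun A K γ z = (1 + ∫ t in (0:ℝ)..1, fQ t) * B' := by
    have h1 : V1 K γ z = (∫ t in (0:ℝ)..1, fQ t) * B' + X := by
      rw [hkey]; abel
    unfold Mfun
    rw [h1, hB', add_mul, one_mul]
    abel
  -- norm bound
  have hQn : ‖∫ t in (0:ℝ)..1, fQ t‖ < 1 := by
    have h1 : ‖∫ t in (0:ℝ)..1, fQ t‖ ≤ ∫ t in (0:ℝ)..1, ‖fQ t‖ :=
      intervalIntegral.norm_integral_le_integral_norm zero_le_one
    have h2 : (∫ t in (0:ℝ)..1, ‖fQ t‖) ≤ ∫ t in (0:ℝ)..1,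
        2 / curveDist A γ * (2 / curveDist A γ) *
          (‖derivWithin γ (Set.Icc 0 1) t‖ * ‖K (γ t)‖) := by
      apply intervalIntegral.integral_mono_on zero_le_one
        (ContinuousOn.intervalIntegrable (by rw [hI]; exact hfQc.norm))
        (ContinuousOn.intervalIntegrable
          (by rw [hI]; exact continuousOn_const.mul (hγ'c.norm.mul hK.norm)))
      intro t ht
      have hw : ‖(z - γ t)⁻¹‖ ≤ 2 / curveDist A γ := by
        rw [norm_inv]
        calc ‖z - γ t‖⁻¹ ≤ (curveDist A γ / 2)⁻¹ :=
              inv_anti₀ (by linarith) (hzγ t ht)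
          _ = 2 / curveDist A γ := inv_div _ _
      have hr := (hres t ht).2
      calc ‖fQ t‖ = ‖derivWithin γ (Set.Icc 0 1) t * (z - γ t)⁻¹‖ * ‖K (γ t) * R t‖ :=
            norm_smul _ _
        _ ≤ ‖derivWithin γ (Set.Icc 0 1) t‖ * ‖(z - γ t)⁻¹‖ * (‖K (γ t)‖ * ‖R t‖) := by
            rw [norm_mul]
            exact mul_le_mul_of_nonneg_left (norm_mul_le _ _) (by positivity)
        _ ≤ ‖derivWithin γ (Set.Icc 0 1) t‖ * (2 / curveDist A γ) *
              (‖K (γ t)‖ * (2 / curveDist A γ)) := by gcongr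
        _ = 2 / curveDist A γ * (2 / curveDist A γ) *
              (‖derivWithin γ (Set.Icc 0 1) t‖ * ‖K (γ t)‖) := by ring
    have h3 : (∫ t in (0:ℝ)..1, 2 / curveDist A γ * (2 / curveDist A γ) *
        (‖derivWithin γ (Set.Icc 0 1) t‖ * ‖K (γ t)‖))
        = 2 / curveDist A γ * (2 / curveDist A γ) * curveVar K γ := by
      rw [intervalIntegral.integral_const_mul]; rfl
    have h4 : 2 / curveDist A γ * (2 / curveDist A γ) * curveVar K γ < 1 := by
      rw [div_mul_div_comm, div_mul_eq_mul_div, div_lt_one (by positivity)]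
      nlinarith
    linarith
  have hQn' : ‖-(∫ t in (0:ℝ)..1, fQ t)‖ < 1 := by rwa [norm_neg]
  have hwv : (↑(Units.oneSub _ hQn') : H →L[ℂ] H) = 1 + ∫ t in (0:ℝ)..1, fQ t := by
    rw [Units.val_oneSub, sub_neg_eq_add]
  constructor
  · intro hM
    rw [hfact, ← hwv] at hM
    have h2 := (Units.isUnit_units_mul _ _).mp hM
    rw [spectrum.notMem_iff, Algebra.algebraMap_eq_smul_one]
    have h3 := h2.neg
    rwa [hB', neg_sub] at h3
  · intro hz'
    have h2 := (spectrum.notMem_iff.mp hz').neg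
    rw [Algebra.algebraMap_eq_smul_one, neg_sub] at h2
    rw [hfact, ← hwv]
    exact (Units.isUnit_units_mul _ _).mpr (hB' ▸ h2)

end
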